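/- The ordinary generating function of the ψ-Stirling numbers of the second kind with fixed lower index k equals x^k / ((1 − 1_ψ x)(1 − 2_ψ x)···(1 − k_ψ x)), i.e. Σ_{n≥0} {n choose k}~_ψ x^n · Π_{j=1}^{k} (1 − j_ψ x) = x^k as formal power series, for every k ≥ 0. -/

import Mathlib

open Finset

/-- the ordinary generating function of the ψ-Stirling numbers of
the second kind with fixed lower index `k` equals
`x^k / ((1-1_ψ x)(1-2_ψ x)⋯(1-k_ψ x))`, i.e.
`(∑_n {n,k}ψ x^n) · ∏_{j=1}^k (1 - j_ψ x) = x^k` as formal power series. -/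
theorem psi_stirling_ogf_closed_form
    (s : ℕ → ℝ) (St : ℕ → ℕ → ℝ)
    (hrec : ∀ n k : ℕ, 1 ≤ k → St (n + 1) k = St n (k - 1) + s k * St n k)
    (hdelta : ∀ n : ℕ, St n 0 = if n = 0 then 1 else 0)
    (hvanish : ∀ n k : ℕ, n < k → St n k = 0) :
    ∀ k : ℕ,
      (PowerSeries.mk fun n => St n k) *
          ∏ j ∈ Finset.Icc 1 k, (1 - PowerSeries.C (s j) * PowerSeries.X) =
        PowerSeries.X ^ k := by
  intro k
  induction k with
  | zero =>
    simp only [Finset.Icc_self, pow_zero]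
    rw [Icc_eq_empty (by norm_num), Finset.prod_empty, mul_one]
    ext n
    simp [hdelta n, PowerSeries.coeff_one]
  | succ k ih =>
    have key : (PowerSeries.mk fun n => St n (k + 1)) *
        (1 - PowerSeries.C (s (k + 1)) * PowerSeries.X) =
        PowerSeries.X * (PowerSeries.mk fun n => St n k) := by
      ext n
      rw [mul_sub, mul_one, map_sub]
      cases n with
      | zero =>
        simp [hvanish 0 (k+1) (Nat.succ_pos k)]
      | succ m =>
        have h := hrec m (k + 1) (Nat.le_add_left 1 k)
        simp only [Nat.add_sub_cancel] at h
        rw [mul_comm (PowerSeries.C (s (k+1))) PowerSeries.X]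
        rw [show (PowerSeries.mk fun n => St n (k+1)) * (PowerSeries.X * PowerSeries.C (s (k+1)))
          = ((PowerSeries.mk fun n => St n (k+1)) * PowerSeries.X) * PowerSeries.C (s (k+1)) by ring]
        simp [PowerSeries.coeff_succ_mul_X, PowerSeries.coeff_succ_X_mul, h]
        ring
    rw [Finset.prod_Icc_succ_top (Nat.le_add_left 1 k), mul_left_comm, key, mul_left_comm,
      mul_comm (∏ j ∈ Finset.Icc 1 k, (1 - PowerSeries.C (s j) * PowerSeries.X)) _, ih,
      pow_succ, mul_comm]
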